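/- Let A be a finite set of cardinality m in a commutative group, and let k be an integer with 1 ≤ k ≤ √m. Then there exists a subset B ⊆ A with |B| = k satisfying |B−B| ≥ 1 + (k(k−1)/2) · (1 − k(k−1)/(2m)). -/

import Mathlib

open scoped Pointwise ComplexOrder

noncomputable section

def IsStandard {G : Type*} [AddCommGroup G] (A : Set G) : Prop :=
  A = -A ∧ (0 : G) ∈ A

def Delta {G : Type*} [AddCommGroup G] (A : Set G) : ℕ :=
  sSup {n | ∃ B : Finset G, ((B : Set G) - (B : Set G)) ∩ A = {0} ∧ B.card = n}

def DeltaBar {G : Type*} [AddCommGroup G] (A : Set G) : ℕ :=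
  sSup {n | ∃ B : Finset G, ((B : Set G) - (B : Set G)) ⊆ A ∧ B.card = n}

def deltaL {G : Type*} [AddCommGroup G] [Fintype G] (A : Set G) : ℝ :=
  (Delta A : ℝ) / (Fintype.card G : ℝ)

def deltaU {G : Type*} [AddCommGroup G] (A : Set G) : ℝ :=
  1 / (DeltaBar A : ℝ)

def ftrans {G : Type*} [AddCommGroup G] [Fintype G] (f : G → ℝ) (γ : AddChar G Circle) : ℂ :=
  ∑ x, (γ x : ℂ) * (f x : ℂ)

def PosFT {G : Type*} [AddCommGroup G] [Fintype G] (f : G → ℝ) : Prop :=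
  ∀ γ : AddChar G Circle, 0 ≤ ftrans f γ

def lamSet {G : Type*} [AddCommGroup G] [Fintype G] (S : Set (G → ℝ)) : Set ℝ :=
  {r | ∃ f ∈ S, PosFT f ∧ (∑ x, f x) ≠ 0 ∧ r = f 0 / ∑ x, f x}

def lam {G : Type*} [AddCommGroup G] [Fintype G] (A : Set G) : ℝ :=
  sInf (lamSet {f | f ≠ 0 ∧ ∀ x ∉ A, f x = 0})

def lamMinus {G : Type*} [AddCommGroup G] [Fintype G] (A : Set G) : ℝ :=
  sInf (lamSet {f | f ≠ 0 ∧ ∀ x ∉ A, f x ≤ 0})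

def lamPlus {G : Type*} [AddCommGroup G] [Fintype G] (A : Set G) : ℝ :=
  sInf (lamSet {f | f ≠ 0 ∧ (∀ x ∉ A, f x = 0) ∧ ∀ x ∈ A, 0 ≤ f x})

def lamPM {G : Type*} [AddCommGroup G] [Fintype G] (A : Set G) : ℝ :=
  sInf (lamSet {f | f ≠ 0 ∧ (∀ x ∉ A, f x ≤ 0) ∧ ∀ x ∈ A, 0 ≤ f x})

theorem stmt18 {G : Type*} [AddCommGroup G] [DecidableEq G]
    (A : Finset G) (m : ℕ) (hm : A.card = m)
    (k : ℕ) (hk1 : 1 ≤ k) (hk2 : (k : ℝ) ≤ Real.sqrt m) :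
    ∃ B : Finset G, B ⊆ A ∧ B.card = k ∧
      (1 : ℝ) + (k * (k - 1) / 2) * (1 - k * (k - 1) / (2 * m)) ≤ ((B - B).card : ℝ) := by
  -- basic facts
  have hm0 : 0 < m := by
    by_contra h
    push_neg at h
    interval_cases m
    simp only [Nat.cast_zero, Real.sqrt_zero] at hk2
    have : (1 : ℝ) ≤ (k : ℝ) := by exact_mod_cast hk1
    linarith
  have hmR : (0 : ℝ) < (m : ℝ) := by exact_mod_cast hm0
  have hk2m : k ^ 2 ≤ m := by
    have h1 : (k : ℝ) ^ 2 ≤ (Real.sqrt m) ^ 2 := by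
      have hk0 : (0 : ℝ) ≤ (k : ℝ) := by positivity
      nlinarith [Real.sqrt_nonneg (m : ℝ)]
    rw [Real.sq_sqrt (by positivity)] at h1
    exact_mod_cast h1
  -- main induction
  have key : ∀ i : ℕ, 1 ≤ i → i ≤ k → ∃ B : Finset G, B ⊆ A ∧ B.card = i ∧
      1 + (i : ℝ) * ((i : ℝ) - 1) / 2 - (∑ j ∈ Finset.range i, (j : ℝ) ^ 3) / m
        ≤ ((B - B).card : ℝ) := by
    intro i hi1
    induction i, hi1 using Nat.le_induction with
    | base =>
      intro _
      have hA : A.Nonempty := by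
        rw [← Finset.card_pos, hm]; exact hm0
      obtain ⟨a, ha⟩ := hA
      refine ⟨{a}, by simpa using ha, Finset.card_singleton a, ?_⟩
      have : ({a} : Finset G) - {a} = {0} := by
        simp [Finset.singleton_sub_singleton]
      rw [this]
      simp
    | succ i hi1' ih =>
      intro hik
      obtain ⟨B, hBA, hBcard, hBle⟩ := ih (le_of_lt (Nat.lt_of_succ_le hik))
      set D : Finset G := B - B with hD
      have hD2 : D.card ≤ i ^ 2 := by
        calc D.card ≤ B.card * B.card := Finset.card_sub_le
        _ = i ^ 2 := by rw [hBcard]; ring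
      have hDm : D.card < m := by
        have hik' : i ≤ k - 1 := by omega
        have : i ^ 2 < k ^ 2 := by
          have : i < k := by omega
          exact Nat.pow_lt_pow_left this (by norm_num)
        omega
      -- counting function
      set c : G → ℕ := fun a => (B.filter fun b => a - b ∈ D).card with hc
      have hsum : ∑ a ∈ A, c a ≤ B.card * D.card := by
        have hswap : ∑ a ∈ A, c a = ∑ b ∈ B, (A.filter fun a => a - b ∈ D).card := by
          simp only [hc, Finset.card_filter]
          rw [Finset.sum_comm]
        rw [hswap]
        have hb : ∀ b ∈ B, (A.filter fun a => a - b ∈ D).card ≤ D.card := by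
          intro b _
          apply Finset.card_le_card_of_injOn (fun a => a - b)
          · intro a ha
            exact (Finset.mem_filter.mp ha).2
          · intro x _ y _ hxy
            exact sub_left_injective hxy
        calc ∑ b ∈ B, (A.filter fun a => a - b ∈ D).card ≤ ∑ _b ∈ B, D.card :=
              Finset.sum_le_sum hb
          _ = B.card * D.card := by rw [Finset.sum_const, smul_eq_mul]
      -- find a good element a
      have hA : A.Nonempty := by rw [← Finset.card_pos, hm]; exact hm0
      have hex : ∃ a ∈ A, m * c a ≤ B.card * D.card := by
        by_contra h
        push_neg at h
        have h1 : ∑ a ∈ A, (B.card * D.card + 1) ≤ ∑ a ∈ A, m * c a :=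
          Finset.sum_le_sum fun a ha => (h a ha)
        have h2 : ∑ a ∈ A, m * c a = m * ∑ a ∈ A, c a := by rw [Finset.mul_sum]
        have h3 : ∑ a ∈ A, (B.card * D.card + 1) = m * (B.card * D.card + 1) := by
          rw [Finset.sum_const, smul_eq_mul, hm]
        rw [h2, h3] at h1
        have h4 : m * ∑ a ∈ A, c a ≤ m * (B.card * D.card) :=
          Nat.mul_le_mul_left m hsum
        nlinarith
      obtain ⟨a, haA, hca⟩ := hex
      have hcai : m * c a ≤ i * D.card := by rw [hBcard] at hca; exact hca
      have hcalt : c a < i := by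
        have h1 : m * c a < m * i := by
          calc m * c a ≤ i * D.card := hcai
            _ < i * m := mul_lt_mul_of_pos_left hDm (by omega)
            _ = m * i := Nat.mul_comm i m
        exact Nat.lt_of_mul_lt_mul_left h1
      have haB : a ∉ B := by
        intro haB
        have hfil : c a = i := by
          rw [hc]
          simp only
          rw [Finset.filter_true_of_mem (fun b hb => Finset.sub_mem_sub haB hb), hBcard]
        omega
      -- new set
      refine ⟨insert a B, ?_, ?_, ?_⟩
      · intro x hx
        rcases Finset.mem_insert.mp hx with h | h
        · rw [h]; exact haA
        · exact hBA h
      · rw [Finset.card_insert_of_notMem haB, hBcard]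
      -- cardinality of new difference set
      set S : Finset G := (B.filter fun b => a - b ∉ D).image (fun b => a - b) with hS
      have hScard : S.card = i - c a := by
        rw [hS, Finset.card_image_of_injective _ sub_right_injective]
        have h1 := Finset.card_filter_add_card_filter_not
          (s := B) (p := fun b => a - b ∈ D)
        have hceq : (Finset.filter (fun b => a - b ∈ D) B).card = c a := rfl
        rw [hceq, hBcard] at h1
        omega
      have hSdisj : Disjoint D S := by
        rw [Finset.disjoint_right]
        intro x hxS hxD
        obtain ⟨b, hb, rfl⟩ := Finset.mem_image.mp hxS
        exact (Finset.mem_filter.mp hb).2 hxD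
      have hsub : D ∪ S ⊆ (insert a B) - (insert a B) := by
        intro x hx
        rcases Finset.mem_union.mp hx with h | h
        · exact Finset.sub_subset_sub (Finset.subset_insert a B)
            (Finset.subset_insert a B) h
        · obtain ⟨b, hb, rfl⟩ := Finset.mem_image.mp h
          exact Finset.sub_mem_sub (Finset.mem_insert_self a B)
            (Finset.mem_insert_of_mem (Finset.mem_filter.mp hb).1)
      have hcard : D.card + (i - c a) ≤ ((insert a B) - (insert a B)).card := by
        rw [← hScard, ← Finset.card_union_of_disjoint hSdisj]
        exact Finset.card_le_card hsub
      -- real arithmetic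
      have hcastsub : ((i - c a : ℕ) : ℝ) = (i : ℝ) - (c a : ℝ) := by
        rw [Nat.cast_sub hcalt.le]
      have hcardR : (D.card : ℝ) + ((i : ℝ) - (c a : ℝ)) ≤
          (((insert a B) - (insert a B)).card : ℝ) := by
        rw [← hcastsub]
        exact_mod_cast hcard
      have hcaR : (c a : ℝ) ≤ (i : ℝ) ^ 3 / m := by
        rw [le_div_iff₀ hmR]
        have h1 : m * c a ≤ i ^ 3 := by
          calc m * c a ≤ i * D.card := hcai
            _ ≤ i * i ^ 2 := Nat.mul_le_mul_left i hD2
            _ = i ^ 3 := by ring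
        calc (c a : ℝ) * m = ((m * c a : ℕ) : ℝ) := by push_cast; ring
          _ ≤ ((i ^ 3 : ℕ) : ℝ) := by exact_mod_cast h1
          _ = (i : ℝ) ^ 3 := by push_cast; ring
      rw [Finset.sum_range_succ, add_div]
      push_cast
      linarith
  -- conclude
  obtain ⟨B, hBA, hBcard, hBle⟩ := key k hk1 le_rfl
  refine ⟨B, hBA, hBcard, ?_⟩
  have hcube : ∀ n : ℕ, ∑ j ∈ Finset.range n, (j : ℝ) ^ 3 = ((n : ℝ) * ((n : ℝ) - 1) / 2) ^ 2 := by
    intro n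
    induction n with
    | zero => simp
    | succ n ih => rw [Finset.sum_range_succ, ih]; push_cast; ring
  rw [hcube k] at hBle
  have heq : (1 : ℝ) + ((k : ℝ) * ((k : ℝ) - 1) / 2) * (1 - (k : ℝ) * ((k : ℝ) - 1) / (2 * m))
      = 1 + (k : ℝ) * ((k : ℝ) - 1) / 2 - ((k : ℝ) * ((k : ℝ) - 1) / 2) ^ 2 / m := by
    field_simp
    ring
  rw [heq]
  exact hBle
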